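/- Let X be the space X[λ, μ, 𝒜, C̄] of the construction. For every A ⊆ λ with |A| < μ, the set ⋃{X_α : α ∈ A} is a closed discrete subspace of X. -/

import Mathlib

open Set Ordinal Cardinal Topology

noncomputable section

namespace DSoukupPaper

/-- The set `S^λ_μ` of ordinals below `lam` of cofinality `mu`. -/
def Sset (lam : Ordinal.{0}) (mu : Cardinal.{0}) : Set Ordinal := {α | α < lam ∧ α.cof = mu}

/-- `C` is a club in the ordinal `o`. -/
def IsClubBelow (C : Set Ordinal.{0}) (o : Ordinal.{0}) : Prop :=
  C ⊆ Set.Iio o ∧ (∀ β < o, ∃ γ ∈ C, β ≤ γ) ∧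
    (∀ β < o, Order.IsSuccLimit β → (∀ γ < β, ∃ δ ∈ C, γ < δ ∧ δ < β) → β ∈ C)

/-- `A` is nonstationary in the ordinal `o`. -/
def IsNonstationaryBelow (A : Set Ordinal.{0}) (o : Ordinal.{0}) : Prop :=
  ∃ C : Set Ordinal, IsClubBelow C o ∧ ∀ x ∈ A, x ∉ C

/-- `A` is stationary in the ordinal `o`. -/
def IsStationaryBelow (A : Set Ordinal.{0}) (o : Ordinal.{0}) : Prop :=
  ∀ C : Set Ordinal, IsClubBelow C o → ∃ x ∈ A, x ∈ C

/-- A `T₁` space is linearly D iff every nontrivial monotone open cover admits a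
closed discrete big set (Guo–Junnila characterization, taken as definition). -/
def LinearlyDSpace (Y : Type*) [TopologicalSpace Y] : Prop :=
  ∀ 𝒰 : Set (Set Y), (∀ U ∈ 𝒰, IsOpen U) → ⋃₀ 𝒰 = Set.univ →
    IsChain (· ⊆ ·) 𝒰 → (∀ U ∈ 𝒰, U ≠ Set.univ) →
    ∃ D : Set Y, IsClosed D ∧ DiscreteTopology D ∧ ∀ U ∈ 𝒰, ¬D ⊆ U

/-- The data of the construction `X[λ,μ,𝒜,C̄]`: cardinals `λ > μ = cf(μ)`,
a MAD family `𝒜 = {M^φ : φ < κ} ⊆ [μ]^μ`, and an `S^λ_μ`-club sequence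
`C̄ = ⟨C_α : α ∈ S^λ_μ⟩`, given via increasing enumerations `a α : μ → C_α`. -/
structure Setup where
  lam : Cardinal.{0}
  mu : Cardinal.{0}
  kappa : Cardinal.{0}
  mu_reg : mu.IsRegular
  mu_lt_lam : mu < lam
  /-- the MAD family: `M φ` for `φ < κ` -/
  M : Ordinal.{0} → Set Ordinal.{0}
  M_sub : ∀ φ < kappa.ord, M φ ⊆ Set.Iio mu.ord
  M_card : ∀ φ < kappa.ord, #(M φ) = Cardinal.lift.{1} mu
  M_ad : ∀ φ < kappa.ord, ∀ ψ < kappa.ord, φ ≠ ψ →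
    #(↥(M φ ∩ M ψ)) < Cardinal.lift.{1} mu
  M_mad : ∀ N ⊆ Set.Iio mu.ord, #N = Cardinal.lift.{1} mu →
    ∃ φ < kappa.ord, #(↥(N ∩ M φ)) = Cardinal.lift.{1} mu
  /-- the club sequence: `a α ξ` is the `ξ`-th element of `C_α` -/
  a : Ordinal.{0} → Ordinal.{0} → Ordinal.{0}
  a_mono : ∀ α ∈ Sset lam.ord mu, ∀ ξ < mu.ord, ∀ ζ < ξ, a α ζ < a α ξ
  a_lt : ∀ α ∈ Sset lam.ord mu, ∀ ξ < mu.ord, a α ξ < α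
  a_unbounded : ∀ α ∈ Sset lam.ord mu, ∀ β < α, ∃ ξ < mu.ord, β ≤ a α ξ
  a_closed : ∀ α ∈ Sset lam.ord mu, ∀ ξ < mu.ord, Order.IsSuccLimit ξ →
    IsLUB (a α '' Set.Iio ξ) (a α ξ)

namespace Setup

variable (P : Setup)

/-- `C_α` as a set. -/
def C (α : Ordinal) : Set Ordinal := P.a α '' Set.Iio P.mu.ord

open Classical in
/-- the interval `I^ξ_α`. -/
def I (α ξ : Ordinal) : Set Ordinal :=
  if Order.IsSuccLimit ξ then Set.Icc (P.a α ξ) (P.a α (ξ + 1)) else Set.Ioc (P.a α ξ) (P.a α (ξ + 1))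

/-- the underlying set of the space: a subset of `λ × κ`. -/
def Xset : Set (Ordinal × Ordinal) :=
  {p | p.1 < P.lam.ord ∧
    ((p.1 ∈ Sset P.lam.ord P.mu ∧ p.2 < P.kappa.ord) ∨
      (p.1 ∉ Sset P.lam.ord P.mu ∧ p.2 = 0))}

/-- the column `X_α` (as a set of pairs). -/
def col (α : Ordinal) : Set (Ordinal × Ordinal) := {p ∈ P.Xset | p.1 = α}

/-- basic neighborhood `U((α,φ),η)` for `α ∈ S^λ_μ`. -/
def U1 (α φ η : Ordinal) : Set (Ordinal × Ordinal) :=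
  {(α, φ)} ∪ ⋃ γ ∈ (⋃ ξ ∈ {ξ | ξ ∈ P.M φ ∧ η ≤ ξ}, P.I α ξ), P.col γ

/-- basic neighborhood `U(α,β) = ⋃{X_γ : β < γ ≤ α}`. -/
def U3 (α β : Ordinal) : Set (Ordinal × Ordinal) := ⋃ γ ∈ Set.Ioc β α, P.col γ

/-- the collection of basic open sets. -/
def basics : Set (Set (Ordinal × Ordinal)) :=
  {B | (∃ α ∈ Sset P.lam.ord P.mu, ∃ φ < P.kappa.ord, ∃ η < P.mu.ord, B = P.U1 α φ η) ∨
    (∃ α < P.lam.ord, α.cof < P.mu ∧ B = {(α, 0)}) ∨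
    (∃ α < P.lam.ord, P.mu < α.cof ∧ ∃ β < α, B = P.U3 α β)}

/-- the topology of `X[λ,μ,𝒜,C̄]`, generated by the basic open sets. -/
instance instTopo : TopologicalSpace ↥P.Xset :=
  TopologicalSpace.generateFrom {V | ∃ B ∈ P.basics, V = Subtype.val ⁻¹' B}

/-- the column `X_α` viewed inside the space. -/
def colS (α : Ordinal) : Set ↥P.Xset := {x | (x : Ordinal × Ordinal).1 = α}

/-- the projection `π(F) = {α < λ : F ∩ X_α ≠ ∅}`. -/
def pi (F : Set ↥P.Xset) : Set Ordinal := {α | ∃ x ∈ F, (x : Ordinal × Ordinal).1 = α}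

/-- `F` is unbounded iff `π(F)` is unbounded in `λ`. -/
def Unbounded (F : Set ↥P.Xset) : Prop := ∀ β < P.lam.ord, ∃ γ ∈ P.pi F, β < γ

/-- `F` is high enough iff `|{α < λ : |F_α| = |F|}| ≥ μ`. -/
def HighEnough (F : Set ↥P.Xset) : Prop :=
  Cardinal.lift.{1} P.mu ≤ #({α | #(↥(F ∩ P.colS α)) = #F} : Set Ordinal)

end Setup
end DSoukupPaper

namespace DSoukupPaper

/-- A set of ordinals of cardinality below the cofinality of `α` is strictly bounded below `α`. -/
lemma bounded_aux (α : Ordinal.{0}) (ν : Cardinal.{0}) (hν : ν ≤ α.cof)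
    (hlim : ℵ₀ ≤ α.cof) (A : Set Ordinal.{0}) (hcard : #A < Cardinal.lift.{1} ν) :
    ∃ β < α, ∀ γ ∈ A, γ < α → γ < β := by
  have hαlim : Order.IsSuccLimit α := Ordinal.aleph0_le_cof.mp hlim
  set A' : Set Ordinal.{0} := {γ | γ ∈ A ∧ γ < α} with hA'def
  have h1 : #A' < Cardinal.lift.{1} ν :=
    lt_of_le_of_lt (Cardinal.mk_le_mk_of_subset (fun γ hγ => hγ.1)) hcard
  obtain ⟨c, hc_lt, hc_eq⟩ := Cardinal.lt_lift_iff.mp h1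
  obtain ⟨e⟩ : Nonempty (c.out ≃ ↥A') := by
    rw [← Cardinal.lift_mk_eq'.{0,1}]
    simpa using hc_eq
  have hι : #c.out < α.cof := by
    rw [Cardinal.mk_out]; exact lt_of_lt_of_le hc_lt hν
  have hf : ∀ i : c.out, ((e i : Ordinal)) < α := fun i => (e i).2.2
  refine ⟨Ordinal.lsub (fun i => (e i : Ordinal)), Ordinal.lsub_lt_ord hι hf, ?_⟩
  intro γ hγA hγα
  have : γ = ((e (e.symm ⟨γ, hγA, hγα⟩) : Ordinal)) := by rw [Equiv.apply_symm_apply]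
  rw [this]
  exact Ordinal.lt_lsub _ _

/-- Key pointwise lemma: every point of the space has a basic neighborhood meeting
the union of the columns indexed by `A` in at most that point. -/
lemma key (P : Setup) (A : Set Ordinal) (_hA : A ⊆ Set.Iio P.lam.ord)
    (hcard : #A < Cardinal.lift.{1} P.mu) (x : ↥P.Xset) :
    ∃ B ∈ P.basics, ↑x ∈ B ∧ ∀ y : ↥P.Xset, ↑y ∈ B → (y : Ordinal × Ordinal).1 ∈ A → y = x := by
  obtain ⟨hxlt, hxcase⟩ := x.2
  have hmu0 : ℵ₀ ≤ P.mu := P.mu_reg.aleph0_le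
  have hmuord : Order.IsSuccLimit P.mu.ord := Cardinal.isSuccLimit_ord hmu0
  by_cases hS : (x : Ordinal × Ordinal).1 ∈ Sset P.lam.ord P.mu
  · -- case `α ∈ S`
    set α := (x : Ordinal × Ordinal).1 with hα
    set φ := (x : Ordinal × Ordinal).2 with hφdef
    have hφ : φ < P.kappa.ord := by
      rcases hxcase with h | h
      · exact h.2
      · exact absurd hS h.1
    have hcof : α.cof = P.mu := hS.2
    have hlimcof : ℵ₀ ≤ α.cof := by rw [hcof]; exact hmu0
    obtain ⟨β, hβα, hβbound⟩ :=
      bounded_aux α P.mu (by rw [hcof]) hlimcof A hcard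
    obtain ⟨η, hη, hβa⟩ := P.a_unbounded α hS β hβα
    refine ⟨P.U1 α φ η, Or.inl ⟨α, hS, φ, hφ, η, hη, rfl⟩, Or.inl rfl, ?_⟩
    intro y hyB hyA
    rcases hyB with hy | hy
    · exact Subtype.ext hy
    · exfalso
      simp only [Set.mem_iUnion, Setup.col, Set.mem_setOf_eq] at hy
      obtain ⟨γ, ⟨ξ, ⟨hξM, hηξ⟩, hγI⟩, _, hyγ⟩ := hy
      have hξμ : ξ < P.mu.ord := P.M_sub φ hφ hξM
      have hγA : γ ∈ A := hyγ ▸ hyA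
      have hγ_ge : P.a α ξ ≤ γ := by
        unfold Setup.I at hγI
        split_ifs at hγI with h
        · exact hγI.1
        · exact le_of_lt hγI.1
      have hγ_le : γ ≤ P.a α (ξ + 1) := by
        unfold Setup.I at hγI
        split_ifs at hγI with h
        · exact hγI.2
        · exact hγI.2
      have hξ1 : ξ + 1 < P.mu.ord := by
        rw [Ordinal.add_one_eq_succ]
        exact hmuord.succ_lt hξμ
      have hγα : γ < α := lt_of_le_of_lt hγ_le (P.a_lt α hS (ξ + 1) hξ1)
      have haa : P.a α η ≤ P.a α ξ := by
        rcases eq_or_lt_of_le hηξ with h | h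
        · rw [h]
        · exact le_of_lt (P.a_mono α hS ξ hξμ η h)
      have : β ≤ γ := le_trans hβa (le_trans haa hγ_ge)
      exact absurd (hβbound γ hγA hγα) (not_lt.mpr this)
  · -- case `α ∉ S`
    set α := (x : Ordinal × Ordinal).1 with hα
    have hx0 : (x : Ordinal × Ordinal).2 = 0 := by
      rcases hxcase with h | h
      · exact absurd h.1 hS
      · exact h.2
    have hcofne : α.cof ≠ P.mu := fun h => hS ⟨hxlt, h⟩
    have hxeq : (x : Ordinal × Ordinal) = (α, 0) := by
      rw [← hx0]
    rcases lt_or_gt_of_ne hcofne with hcof | hcof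
    · -- isolated point
      refine ⟨{(α, 0)}, Or.inr (Or.inl ⟨α, hxlt, hcof, rfl⟩), hxeq, ?_⟩
      intro y hy _
      apply Subtype.ext
      rw [hy, hxeq]
    · -- `cf α > μ`
      have hlimcof : ℵ₀ ≤ α.cof := le_of_lt (lt_of_le_of_lt hmu0 hcof)
      obtain ⟨β, hβα, hβbound⟩ :=
        bounded_aux α P.mu (le_of_lt hcof) hlimcof A hcard
      refine ⟨P.U3 α β, Or.inr (Or.inr ⟨α, hxlt, hcof, β, hβα, rfl⟩), ?_, ?_⟩
      · simp only [Setup.U3, Set.mem_iUnion, Setup.col, Set.mem_setOf_eq]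
        exact ⟨α, ⟨hβα, le_rfl⟩, x.2, rfl⟩
      · intro y hyB hyA
        simp only [Setup.U3, Set.mem_iUnion, Setup.col, Set.mem_setOf_eq] at hyB
        obtain ⟨γ, ⟨hβγ, hγα⟩, hyX, hyγ⟩ := hyB
        rcases eq_or_lt_of_le hγα with h | h
        · -- γ = α
          have hy1 : (y : Ordinal × Ordinal).1 = α := by rw [hyγ, h]
          have hy0 : (y : Ordinal × Ordinal).2 = 0 := by
            rcases y.2.2 with h' | h'
            · exact absurd (hy1 ▸ h'.1) hS
            · exact h'.2
          apply Subtype.ext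
          rw [hxeq]
          rw [← hy1, ← hy0]
        · exact absurd (hβbound γ (hyγ ▸ hyA) h) (not_lt.mpr (le_of_lt hβγ))

end DSoukupPaper

namespace DSoukupPaper

theorem stmt6 (P : Setup) (A : Set Ordinal) (hA : A ⊆ Set.Iio P.lam.ord)
    (hcard : #A < Cardinal.lift.{1} P.mu) :
    IsClosed (⋃ α ∈ A, P.colS α) ∧ DiscreteTopology ↥(⋃ α ∈ A, P.colS α) := by
  set D : Set ↥P.Xset := ⋃ α ∈ A, P.colS α with hD
  have hmemD : ∀ y : ↥P.Xset, y ∈ D ↔ (y : Ordinal × Ordinal).1 ∈ A := by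
    intro y
    simp only [hD, Set.mem_iUnion, Setup.colS, Set.mem_setOf_eq]
    constructor
    · rintro ⟨i, hi, rfl⟩; exact hi
    · intro h; exact ⟨_, h, rfl⟩
  constructor
  · rw [← isOpen_compl_iff, isOpen_iff_forall_mem_open]
    intro x hx
    obtain ⟨B, hB, hxB, hkey⟩ := key P A hA hcard x
    refine ⟨Subtype.val ⁻¹' B, ?_, ?_, hxB⟩
    · intro z hz hzD
      exact hx (hkey z hz ((hmemD z).mp hzD) ▸ hzD)
    · exact TopologicalSpace.isOpen_generateFrom_of_mem ⟨B, hB, rfl⟩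
  · rw [discreteTopology_iff_isOpen_singleton]
    intro x
    obtain ⟨B, hB, hxB, hkey⟩ := key P A hA hcard ↑x
    have hBopen : IsOpen (Subtype.val ⁻¹' B : Set ↥P.Xset) :=
      TopologicalSpace.isOpen_generateFrom_of_mem ⟨B, hB, rfl⟩
    have : {x} = (fun z : ↥D => (z : ↥P.Xset)) ⁻¹' (Subtype.val ⁻¹' B) := by
      ext z
      simp only [Set.mem_singleton_iff, Set.mem_preimage]
      constructor
      · rintro rfl; exact hxB
      · intro hz
        exact Subtype.ext (hkey ↑z hz ((hmemD ↑z).mp z.2))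
    rw [this]
    exact hBopen.preimage continuous_subtype_val

end DSoukupPaper
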